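/- For 1 ≤ i ≤ w ≤ n and disjoint i-sets M, M' with bijection ': M → M', the function f^{i,w,n} on w-subsets equals the induced function I^{i,w}(f^{i,i,n}), i.e., for every w-subset x, f^{i,w,n}(x) = Σ_{y ⊆ x, |y| = i} f^{i,i,n}(y). -/

import Mathlib

open Finset

/-- The function `f^{i,k,n}` built from disjoint paired `i`-sets, on `k`-subsets. -/
noncomputable def steinerFun (n i : ℕ) (m m' : Fin i → Fin n)
    (x : Finset (Fin n)) : ℝ :=
  if ∀ k : Fin i, Xor (m k ∈ x) (m' k ∈ x) then
    (-1 : ℝ) ^ ((x ∩ Finset.image m Finset.univ).card)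
  else 0

/-- `f^{i,w,n}` equals the induced function `I^{i,w}(f^{i,i,n})`: for every `w`-subset
`x`, `f^{i,w,n}(x) = ∑_{y ⊆ x, |y| = i} f^{i,i,n}(y)`. -/
theorem steinerFun_eq_induced (n i w : ℕ) (hi : 1 ≤ i) (hiw : i ≤ w) (hwn : w ≤ n)
    (m m' : Fin i → Fin n) (hinj : Function.Injective (Sum.elim m m')) :
    ∀ x : Finset (Fin n), x.card = w →
      steinerFun n i m m' x = ∑ y ∈ x.powersetCard i, steinerFun n i m m' y := by
  classical
  have hm : Function.Injective m := fun a b h => by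
    have := hinj (a₁ := Sum.inl a) (a₂ := Sum.inl b) h
    simpa using this
  have hm' : Function.Injective m' := fun a b h => by
    have := hinj (a₁ := Sum.inr a) (a₂ := Sum.inr b) h
    simpa using this
  have hd : ∀ a b, m a ≠ m' b := fun a b h => by
    have := hinj (a₁ := Sum.inl a) (a₂ := Sum.inr b) h
    simp at this
  have hMimg : ∀ a, m' a ∉ Finset.image m Finset.univ := by
    intro a ha
    simp only [Finset.mem_image, Finset.mem_univ, true_and] at ha
    obtain ⟨b, hb⟩ := ha
    exact hd b a hb
  intro x hx
  by_cases hP : ∀ k : Fin i, Xor (m k ∈ x) (m' k ∈ x)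
  · -- Case 1: x satisfies the Xor condition; exactly one y contributes.
    set e : Fin i → Fin n := fun k => if m k ∈ x then m k else m' k with he
    have hei : Function.Injective e := by
      intro a b h
      by_cases ha : m a ∈ x <;> by_cases hb : m b ∈ x <;>
        simp only [he, ha, hb, if_true, if_false] at h
      · exact hm h
      · exact absurd h (hd a b)
      · exact absurd h.symm (hd b a)
      · exact hm' h
    set y₀ : Finset (Fin n) := Finset.image e Finset.univ with hy₀
    have hy₀card : y₀.card = i := by
      rw [hy₀, Finset.card_image_of_injective _ hei, Finset.card_univ, Fintype.card_fin]
    have hy₀sub : y₀ ⊆ x := by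
      intro a ha
      simp only [hy₀, Finset.mem_image, Finset.mem_univ, true_and] at ha
      obtain ⟨k, hk⟩ := ha
      by_cases hmk : m k ∈ x
      · simp only [he, hmk, if_true] at hk; subst hk; exact hmk
      · simp only [he, hmk, if_false] at hk; subst hk
        rcases hP k with ⟨h1, _⟩ | ⟨h1, _⟩
        · exact absurd h1 hmk
        · exact h1
    have hmem_m : ∀ j, m j ∈ y₀ ↔ m j ∈ x := by
      intro j
      constructor
      · intro h
        simp only [hy₀, Finset.mem_image, Finset.mem_univ, true_and] at h
        obtain ⟨k, hk⟩ := h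
        by_cases hmk : m k ∈ x
        · simp only [he, hmk, if_true] at hk
          rwa [hm hk] at hmk
        · simp only [he, hmk, if_false] at hk
          exact absurd hk.symm (hd j k)
      · intro h
        simp only [hy₀, Finset.mem_image, Finset.mem_univ, true_and]
        exact ⟨j, by simp [he, h]⟩
    have hmem_m' : ∀ j, m' j ∈ y₀ ↔ m' j ∈ x := by
      intro j
      constructor
      · intro h
        simp only [hy₀, Finset.mem_image, Finset.mem_univ, true_and] at h
        obtain ⟨k, hk⟩ := h
        by_cases hmk : m k ∈ x
        · simp only [he, hmk, if_true] at hk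
          exact absurd hk (hd k j)
        · simp only [he, hmk, if_false] at hk
          have := hm' hk
          subst this
          rcases hP k with ⟨h1, _⟩ | ⟨h1, _⟩
          · exact absurd h1 hmk
          · exact h1
      · intro h
        have hmj : m j ∉ x := by
          rcases hP j with ⟨_, h2⟩ | ⟨_, h2⟩
          · exact absurd h h2
          · exact h2
        simp only [hy₀, Finset.mem_image, Finset.mem_univ, true_and]
        exact ⟨j, by simp [he, hmj]⟩
    have hPy₀ : ∀ k : Fin i, Xor (m k ∈ y₀) (m' k ∈ y₀) := by
      intro k
      rcases hP k with ⟨h1, h2⟩ | ⟨h1, h2⟩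
      · exact Or.inl ⟨(hmem_m k).2 h1, fun h => h2 ((hmem_m' k).1 h)⟩
      · exact Or.inr ⟨(hmem_m' k).2 h1, fun h => h2 ((hmem_m k).1 h)⟩
    have hy₀mem : y₀ ∈ x.powersetCard i :=
      Finset.mem_powersetCard.2 ⟨hy₀sub, hy₀card⟩
    have hsum : ∑ y ∈ x.powersetCard i, steinerFun n i m m' y = steinerFun n i m m' y₀ := by
      refine Finset.sum_eq_single y₀ ?_ (fun h => absurd hy₀mem h)
      intro b hb hbne
      rw [Finset.mem_powersetCard] at hb
      by_contra hbz
      have hPb : ∀ k : Fin i, Xor (m k ∈ b) (m' k ∈ b) := by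
        by_contra hc
        exact hbz (by rw [steinerFun, if_neg hc])
      -- show b = y₀
      have hsub : y₀ ⊆ b := by
        intro a ha
        simp only [hy₀, Finset.mem_image, Finset.mem_univ, true_and] at ha
        obtain ⟨k, hk⟩ := ha
        by_cases hmk : m k ∈ x
        · simp only [he, hmk, if_true] at hk
          subst hk
          rcases hPb k with ⟨h1, _⟩ | ⟨h1, _⟩
          · exact h1
          · -- m' k ∈ b ⊆ x, but hP says m' k ∉ x
            rcases hP k with ⟨_, h2⟩ | ⟨_, h2⟩
            · exact absurd (hb.1 h1) h2
            · exact absurd hmk h2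
        · simp only [he, hmk, if_false] at hk
          subst hk
          rcases hPb k with ⟨h1, _⟩ | ⟨h1, _⟩
          · exact absurd (hb.1 h1) hmk
          · exact h1
      exact hbne (Finset.eq_of_subset_of_card_le hsub (by rw [hy₀card, hb.2])).symm
    rw [hsum, steinerFun, steinerFun, if_pos hP, if_pos hPy₀]
    have : y₀ ∩ Finset.image m Finset.univ = x ∩ Finset.image m Finset.univ := by
      ext a
      simp only [Finset.mem_inter, Finset.mem_image, Finset.mem_univ, true_and]
      constructor
      · rintro ⟨h1, j, rfl⟩
        exact ⟨(hmem_m j).1 h1, j, rfl⟩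
      · rintro ⟨h1, j, rfl⟩
        exact ⟨(hmem_m j).2 h1, j, rfl⟩
    rw [this]
  · -- Case 2: x fails the Xor condition at some k; the sum vanishes.
    rw [steinerFun, if_neg hP]
    push_neg at hP
    obtain ⟨k, hk⟩ := hP
    rw [Xor] at hk
    push_neg at hk
    by_cases hmk : m k ∈ x
    · -- both m k and m' k are in x; use an involution
      have hmk' : m' k ∈ x := hk.1 hmk
      have hne : m k ≠ m' k := hd k k
      refine (Finset.sum_involution
        (fun y _ => if m k ∈ y then
            (if m' k ∈ y then y else insert (m' k) (y.erase (m k)))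
          else (if m' k ∈ y then insert (m k) (y.erase (m' k)) else y))
        ?_ ?_ ?_ ?_).symm
      · -- f a + f (g a) = 0
        intro y hy
        by_cases h1 : m k ∈ y <;> by_cases h2 : m' k ∈ y <;>
          simp only [h1, h2, if_true, if_false]
        · have : ¬ ∀ j : Fin i, Xor (m j ∈ y) (m' j ∈ y) := by
            intro h
            rcases h k with ⟨_, hc⟩ | ⟨_, hc⟩
            · exact hc h2
            · exact hc h1
          rw [steinerFun, if_neg this]; ring
        · -- swap m k out, m' k in
          set y' := insert (m' k) (y.erase (m k)) with hy'
          have hmem : ∀ a, a ≠ m k → a ≠ m' k → (a ∈ y' ↔ a ∈ y) := by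
            intro a ha1 ha2
            simp [hy', Finset.mem_insert, Finset.mem_erase, ha1, ha2]
          have hP' : (∀ j : Fin i, Xor (m j ∈ y') (m' j ∈ y')) ↔
              (∀ j : Fin i, Xor (m j ∈ y) (m' j ∈ y)) := by
            have hk' : m k ∉ y' ∧ m' k ∈ y' := by
              constructor
              · simp [hy', Finset.mem_insert, hne, Finset.mem_erase]
              · simp [hy']
            constructor
            · intro h j
              by_cases hj : j = k
              · subst hj; exact Or.inl ⟨h1, h2⟩
              · have e1 := hmem (m j) (fun hc => hj (hm hc)) (fun hc => hd j k hc)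
                have e2 := hmem (m' j) (fun hc => hd k j hc.symm) (fun hc => hj (hm' hc))
                rw [← e1, ← e2]; exact h j
            · intro h j
              by_cases hj : j = k
              · subst hj; exact Or.inr ⟨hk'.2, hk'.1⟩
              · have e1 := hmem (m j) (fun hc => hj (hm hc)) (fun hc => hd j k hc)
                have e2 := hmem (m' j) (fun hc => hd k j hc.symm) (fun hc => hj (hm' hc))
                rw [e1, e2]; exact h j
          by_cases hPy : ∀ j : Fin i, Xor (m j ∈ y) (m' j ∈ y)
          · rw [steinerFun, steinerFun, if_pos hPy, if_pos (hP'.2 hPy)]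
            have hint : y' ∩ Finset.image m Finset.univ =
                (y ∩ Finset.image m Finset.univ).erase (m k) := by
              ext a
              simp only [Finset.mem_inter, Finset.mem_erase, hy', Finset.mem_insert,
                Finset.mem_erase]
              constructor
              · rintro ⟨h3 | ⟨h3, h4⟩, h5⟩
                · exact absurd h5 (h3 ▸ hMimg k)
                · exact ⟨h3, h4, h5⟩
              · rintro ⟨h3, h4, h5⟩
                exact ⟨Or.inr ⟨h3, h4⟩, h5⟩
            have hmky : m k ∈ y ∩ Finset.image m Finset.univ := by
              simp [Finset.mem_inter, h1]
            have hpos : 1 ≤ (y ∩ Finset.image m Finset.univ).card :=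
              Finset.card_pos.2 ⟨m k, hmky⟩
            obtain ⟨c, hc⟩ : ∃ c, (y ∩ Finset.image m Finset.univ).card = c + 1 :=
              ⟨_, (Nat.succ_pred_eq_of_pos hpos).symm⟩
            rw [hint, Finset.card_erase_of_mem hmky, hc]
            simp only [Nat.add_sub_cancel, pow_succ]
            ring
          · rw [steinerFun, steinerFun, if_neg hPy, if_neg (fun h => hPy (hP'.1 h))]; ring
        · -- swap m' k out, m k in (symmetric)
          set y' := insert (m k) (y.erase (m' k)) with hy'
          have hmem : ∀ a, a ≠ m k → a ≠ m' k → (a ∈ y' ↔ a ∈ y) := by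
            intro a ha1 ha2
            simp [hy', Finset.mem_insert, Finset.mem_erase, ha1, ha2]
          have hP' : (∀ j : Fin i, Xor (m j ∈ y') (m' j ∈ y')) ↔
              (∀ j : Fin i, Xor (m j ∈ y) (m' j ∈ y)) := by
            have hk' : m k ∈ y' ∧ m' k ∉ y' := by
              constructor
              · simp [hy']
              · simp [hy', Finset.mem_insert, hne.symm, Finset.mem_erase]
            constructor
            · intro h j
              by_cases hj : j = k
              · subst hj; exact Or.inr ⟨h2, h1⟩
              · have e1 := hmem (m j) (fun hc => hj (hm hc)) (fun hc => hd j k hc)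
                have e2 := hmem (m' j) (fun hc => hd k j hc.symm) (fun hc => hj (hm' hc))
                rw [← e1, ← e2]; exact h j
            · intro h j
              by_cases hj : j = k
              · subst hj; exact Or.inl ⟨hk'.1, hk'.2⟩
              · have e1 := hmem (m j) (fun hc => hj (hm hc)) (fun hc => hd j k hc)
                have e2 := hmem (m' j) (fun hc => hd k j hc.symm) (fun hc => hj (hm' hc))
                rw [e1, e2]; exact h j
          by_cases hPy : ∀ j : Fin i, Xor (m j ∈ y) (m' j ∈ y)
          · rw [steinerFun, steinerFun, if_pos hPy, if_pos (hP'.2 hPy)]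
            have hint : y' ∩ Finset.image m Finset.univ =
                insert (m k) (y ∩ Finset.image m Finset.univ) := by
              ext a
              simp only [Finset.mem_inter, Finset.mem_insert, hy', Finset.mem_insert,
                Finset.mem_erase]
              constructor
              · rintro ⟨h3 | ⟨h3, h4⟩, h5⟩
                · exact Or.inl h3
                · exact Or.inr ⟨h4, h5⟩
              · rintro (rfl | ⟨h3, h4⟩)
                · exact ⟨Or.inl rfl, Finset.mem_image.2 ⟨k, Finset.mem_univ k, rfl⟩⟩
                · refine ⟨Or.inr ⟨?_, h3⟩, h4⟩
                  rintro rfl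
                  exact hMimg k h4
            have hnm : m k ∉ y ∩ Finset.image m Finset.univ := by
              simp [Finset.mem_inter, h1]
            rw [hint, Finset.card_insert_of_notMem hnm]
            ring
          · rw [steinerFun, steinerFun, if_neg hPy, if_neg (fun h => hPy (hP'.1 h))]; ring
        · have : ¬ ∀ j : Fin i, Xor (m j ∈ y) (m' j ∈ y) := by
            intro h
            rcases h k with ⟨hc, _⟩ | ⟨hc, _⟩
            · exact h1 hc
            · exact h2 hc
          rw [steinerFun, if_neg this]; ring
      · -- f a ≠ 0 → g a ≠ a
        intro y hy hfy
        have hPy : ∀ j : Fin i, Xor (m j ∈ y) (m' j ∈ y) := by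
          by_contra hc
          exact hfy (by rw [steinerFun, if_neg hc])
        rcases hPy k with ⟨h1, h2⟩ | ⟨h1, h2⟩
        · simp only [h1, h2, if_true, if_false]
          intro hc
          have : m' k ∈ y := by rw [← hc]; simp
          exact h2 this
        · simp only [h1, h2, if_true, if_false]
          intro hc
          have : m k ∈ y := by rw [← hc]; simp
          exact h2 this
      · -- g a ∈ s
        intro y hy
        rw [Finset.mem_powersetCard] at hy ⊢
        by_cases h1 : m k ∈ y <;> by_cases h2 : m' k ∈ y <;>
          simp only [h1, h2, if_true, if_false]
        · exact hy
        · constructor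
          · intro a ha
            rcases Finset.mem_insert.1 ha with rfl | ha
            · exact hmk'
            · exact hy.1 (Finset.mem_of_mem_erase ha)
          · rw [Finset.card_insert_of_notMem (fun hc => h2 (Finset.mem_of_mem_erase hc)),
              Finset.card_erase_of_mem h1, hy.2]
            omega
        · constructor
          · intro a ha
            rcases Finset.mem_insert.1 ha with rfl | ha
            · exact hmk
            · exact hy.1 (Finset.mem_of_mem_erase ha)
          · rw [Finset.card_insert_of_notMem (fun hc => h1 (Finset.mem_of_mem_erase hc)),
              Finset.card_erase_of_mem h2, hy.2]
            omega
        · exact hy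
      · -- g (g a) = a
        intro y hy
        beta_reduce
        by_cases h1 : m k ∈ y <;> by_cases h2 : m' k ∈ y
        · rw [if_pos h1, if_pos h2, if_pos h1, if_pos h2]
        · rw [if_pos h1, if_neg h2]
          have e1 : m k ∉ insert (m' k) (y.erase (m k)) := by
            simp [Finset.mem_insert, hne, Finset.mem_erase]
          have e2 : m' k ∈ insert (m' k) (y.erase (m k)) := by simp
          rw [if_neg e1, if_pos e2,
            Finset.erase_insert (by simp [Finset.mem_erase, h2]),
            Finset.insert_erase h1]
        · rw [if_neg h1, if_pos h2]
          have e1 : m k ∈ insert (m k) (y.erase (m' k)) := by simp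
          have e2 : m' k ∉ insert (m k) (y.erase (m' k)) := by
            simp [Finset.mem_insert, hne.symm, Finset.mem_erase]
          rw [if_pos e1, if_neg e2,
            Finset.erase_insert (by simp [Finset.mem_erase, h1]),
            Finset.insert_erase h2]
        · rw [if_neg h1, if_neg h2, if_neg h1, if_neg h2]
    · -- both m k and m' k are outside x; all terms vanish
      have hmk' : m' k ∉ x := fun h => hmk (hk.2 h)
      refine (Finset.sum_eq_zero ?_).symm
      intro y hy
      rw [Finset.mem_powersetCard] at hy
      rw [steinerFun, if_neg]
      intro h
      rcases h k with ⟨hc, _⟩ | ⟨hc, _⟩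
      · exact hmk (hy.1 hc)
      · exact hmk' (hy.1 hc)
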